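/- The Legendre polynomials defined by the recursion (i+1) L_{i+1} = (2i+1) x L_i − i L_{i−1}, L_0 = 1, L_1 = x, satisfy ∫_{-1}^{1} L_i(x)² dx = 2/(2i+1). -/

import Mathlib

open Polynomial

/-- Legendre polynomials via the three-term recursion. -/
noncomputable def legendreP : ℕ → ℝ[X]
  | 0 => 1
  | 1 => X
  | (i + 2) =>
      ((2 * ((i : ℝ) + 1) + 1) / ((i : ℝ) + 2)) • (X * legendreP (i + 1))
        - (((i : ℝ) + 1) / ((i : ℝ) + 2)) • legendreP i

lemma legendreP_rec (n : ℕ) :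
    ((n : ℝ[X]) + 2) * legendreP (n + 2)
      = (2 * (n : ℝ[X]) + 3) * (X * legendreP (n + 1)) - ((n : ℝ[X]) + 1) * legendreP n := by
  have h2 : ((n : ℝ) + 2) ≠ 0 := by positivity
  have hdef : legendreP (n + 2) =
      ((2 * ((n : ℝ) + 1) + 1) / ((n : ℝ) + 2)) • (X * legendreP (n + 1))
        - (((n : ℝ) + 1) / ((n : ℝ) + 2)) • legendreP n := rfl
  have cn : ((n : ℝ[X]) + 2) = C ((n : ℝ) + 2) := by
    simp [C_eq_natCast, map_ofNat]
  have cn1 : ((n : ℝ[X]) + 1) = C ((n : ℝ) + 1) := by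
    simp [C_eq_natCast, map_ofNat]
  have cn3 : (2 * (n : ℝ[X]) + 3) = C (2 * (n : ℝ) + 3) := by
    simp [C_eq_natCast, map_ofNat]
  have e1 : C ((n : ℝ) + 2) * C ((2 * ((n : ℝ) + 1) + 1) / ((n : ℝ) + 2))
      = C (2 * (n : ℝ) + 3) := by
    rw [← C_mul]; congr 1; field_simp; ring
  have e2 : C ((n : ℝ) + 2) * C (((n : ℝ) + 1) / ((n : ℝ) + 2)) = C ((n : ℝ) + 1) := by
    rw [← C_mul]; congr 1; field_simp
  rw [hdef, smul_eq_C_mul, smul_eq_C_mul, cn, cn1, cn3]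
  linear_combination (X * legendreP (n + 1)) * e1 - legendreP n * e2

lemma legendreP_UV (n : ℕ) :
    (derivative (legendreP (n + 1)) = X * derivative (legendreP n) + ((n : ℝ[X]) + 1) * legendreP n)
    ∧ (X * derivative (legendreP (n + 1)) = derivative (legendreP n) + ((n : ℝ[X]) + 1) * legendreP (n + 1)) := by
  induction n with
  | zero =>
    constructor <;> simp [legendreP, show legendreP 1 = X from rfl, show legendreP 0 = 1 from rfl]
  | succ n ih =>
    obtain ⟨hU, hV⟩ := ih
    have hnz : ((n : ℝ[X]) + 2) ≠ 0 := by
      have : ((n : ℝ[X]) + 2) = ((n + 2 : ℕ) : ℝ[X]) := by push_cast; ring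
      rw [this]
      exact Nat.cast_ne_zero.mpr (by omega)
    have hd := congrArg derivative (legendreP_rec n)
    simp only [derivative_mul, derivative_add, derivative_sub, derivative_natCast,
      derivative_ofNat, derivative_X, derivative_one, zero_mul, one_mul, mul_one,
      add_zero, zero_add, mul_zero] at hd
    constructor
    · apply mul_left_cancel₀ hnz
      push_cast
      linear_combination hd + ((n : ℝ[X]) + 1) * hV
    · apply mul_left_cancel₀ hnz
      push_cast
      linear_combination X * hd + (2 * (n : ℝ[X]) + 3) * X * hV - ((n : ℝ[X]) + 2) * hU
        - ((n : ℝ[X]) + 2) * legendreP_rec n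

lemma legendreP_deriv_sub (n : ℕ) :
    derivative (legendreP (n + 2))
      = (2 * (n : ℝ[X]) + 3) * legendreP (n + 1) + derivative (legendreP n) := by
  have hU := (legendreP_UV (n + 1)).1
  have hV := (legendreP_UV n).2
  push_cast at hU
  linear_combination hU + hV

lemma legendreP_ode (n : ℕ) :
    derivative ((1 - X ^ 2) * derivative (legendreP n))
      = -((n : ℝ[X]) * ((n : ℝ[X]) + 1)) * legendreP n := by
  cases n with
  | zero => simp [show legendreP 0 = 1 from rfl]
  | succ m =>
    have hU := (legendreP_UV m).1
    have hV := (legendreP_UV m).2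
    have key : (1 - X ^ 2) * derivative (legendreP (m + 1))
        = ((m : ℝ[X]) + 1) * (legendreP m - X * legendreP (m + 1)) := by
      linear_combination hU - X * hV
    have hd := congrArg derivative key
    simp only [derivative_mul, derivative_add, derivative_sub, derivative_natCast,
      derivative_ofNat, derivative_X, derivative_one, derivative_X_pow, zero_mul, one_mul,
      mul_one, add_zero, zero_add, mul_zero, zero_sub, Nat.cast_ofNat, pow_one] at hd ⊢
    push_cast
    linear_combination hd - ((m : ℝ[X]) + 1) * hV

lemma legendreP_eval_one (n : ℕ) : (legendreP n).eval 1 = 1 := by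
  induction n using Nat.twoStepInduction with
  | zero => simp [show legendreP 0 = 1 from rfl]
  | one => simp [show legendreP 1 = X from rfl]
  | more n ih1 ih2 =>
    have hnz : ((n : ℝ) + 2) ≠ 0 := by positivity
    have h := congrArg (eval 1) (legendreP_rec n)
    simp only [eval_mul, eval_add, eval_sub, eval_natCast, eval_ofNat, eval_X, eval_one,
      ih1, ih2, mul_one, one_mul] at h
    apply mul_left_cancel₀ hnz
    rw [h]; ring

lemma legendreP_eval_neg_one (n : ℕ) : (legendreP n).eval (-1) = (-1) ^ n := by
  induction n using Nat.twoStepInduction with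
  | zero => simp [show legendreP 0 = 1 from rfl]
  | one => simp [show legendreP 1 = X from rfl]
  | more n ih1 ih2 =>
    have hnz : ((n : ℝ) + 2) ≠ 0 := by positivity
    have h := congrArg (eval (-1)) (legendreP_rec n)
    simp only [eval_mul, eval_add, eval_sub, eval_natCast, eval_ofNat, eval_X, eval_one,
      ih1, ih2, mul_one, one_mul] at h
    apply mul_left_cancel₀ hnz
    rw [h]; ring

lemma integral_eval_derivative (p : ℝ[X]) :
    ∫ x in (-1:ℝ)..1, (derivative p).eval x = p.eval 1 - p.eval (-1) := by
  apply intervalIntegral.integral_deriv_eq_sub' (fun x => p.eval x)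
  · funext x
    exact (p.hasDerivAt x).deriv
  · intro x _
    exact (p.hasDerivAt x).differentiableAt
  · exact ((derivative p).continuous).continuousOn

lemma legendreP_ortho {m n : ℕ} (h : m ≠ n) :
    ∫ x in (-1:ℝ)..1, (legendreP m).eval x * (legendreP n).eval x = 0 := by
  set W : ℝ[X] := (1 - X ^ 2) *
      (legendreP m * derivative (legendreP n) - legendreP n * derivative (legendreP m)) with hWdef
  have hm := legendreP_ode m
  have hn := legendreP_ode n
  have hW : derivative W
      = ((m : ℝ[X]) * ((m : ℝ[X]) + 1) - (n : ℝ[X]) * ((n : ℝ[X]) + 1))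
          * (legendreP m * legendreP n) := by
    simp only [hWdef, derivative_mul, derivative_sub, derivative_one, derivative_X_pow,
      Nat.cast_ofNat, pow_one, zero_sub, zero_mul, mul_zero, zero_add, mul_one] at hm hn ⊢
    linear_combination legendreP m * hn - legendreP n * hm
  have hint := integral_eval_derivative W
  have hevals : ∀ x : ℝ, (derivative W).eval x
      = ((m : ℝ) * ((m : ℝ) + 1) - (n : ℝ) * ((n : ℝ) + 1))
          * ((legendreP m).eval x * (legendreP n).eval x) := by
    intro x
    rw [hW]
    simp
  have hW1 : W.eval 1 = 0 := by simp [hWdef]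
  have hWm1 : W.eval (-1) = 0 := by simp [hWdef]
  rw [hW1, hWm1, sub_zero] at hint
  simp only [hevals] at hint
  rw [intervalIntegral.integral_const_mul] at hint
  have hc : ((m : ℝ) * ((m : ℝ) + 1) - (n : ℝ) * ((n : ℝ) + 1)) ≠ 0 := by
    have hmn : (m : ℝ) ≠ (n : ℝ) := by exact_mod_cast h
    rcases hmn.lt_or_gt with h' | h'
    · have h0 : (0:ℝ) ≤ (m:ℝ) := Nat.cast_nonneg m
      nlinarith
    · have h0 : (0:ℝ) ≤ (n:ℝ) := Nat.cast_nonneg n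
      nlinarith
  exact (mul_eq_zero.mp hint).resolve_left hc

lemma legendreP_dortho (n : ℕ) : ∀ m, m < n →
    ∫ x in (-1:ℝ)..1, (derivative (legendreP m)).eval x * (legendreP n).eval x = 0 := by
  intro m
  induction m using Nat.twoStepInduction with
  | zero => intro _; simp [show legendreP 0 = 1 from rfl]
  | one =>
    intro h
    have := legendreP_ortho (show 0 ≠ n by omega)
    simpa [show legendreP 0 = 1 from rfl, show legendreP 1 = X from rfl] using this
  | more m ih _ =>
    intro h
    have key : ∀ x : ℝ, (derivative (legendreP (m + 2))).eval x * (legendreP n).eval x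
        = (2 * (m : ℝ) + 3) * ((legendreP (m + 1)).eval x * (legendreP n).eval x)
          + (derivative (legendreP m)).eval x * (legendreP n).eval x := by
      intro x
      rw [legendreP_deriv_sub]
      simp
      ring
    simp only [key]
    rw [intervalIntegral.integral_add
        (f := fun x => (2 * (m : ℝ) + 3) * ((legendreP (m + 1)).eval x * (legendreP n).eval x))
        (g := fun x => (derivative (legendreP m)).eval x * (legendreP n).eval x)
        ((continuous_const.mul ((legendreP (m+1)).continuous.mul
          (legendreP n).continuous)).intervalIntegrable _ _)
        (((derivative (legendreP m)).continuous.mul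
          (legendreP n).continuous).intervalIntegrable _ _),
      intervalIntegral.integral_const_mul, legendreP_ortho (show m + 1 ≠ n by omega),
      ih (by omega), mul_zero, add_zero]

/-- ∫_{-1}^{1} L_i(x)² dx = 2/(2i+1). -/
theorem legendre_norm (i : ℕ) :
    ∫ x in (-1 : ℝ)..1, (legendreP i).eval x ^ 2 = 2 / (2 * (i : ℝ) + 1) := by
  cases i with
  | zero =>
    simp [show legendreP 0 = 1 from rfl]
    norm_num
  | succ m =>
    have h2 : ∫ x in (-1:ℝ)..1, (derivative (legendreP (m+1) * legendreP (m+2))).eval x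
        = 2 := by
      rw [integral_eval_derivative]
      simp only [eval_mul, legendreP_eval_one, legendreP_eval_neg_one, one_mul]
      rw [← pow_add]
      rw [Odd.neg_one_pow ⟨m + 1, by ring⟩]
      norm_num
    have key : ∀ x : ℝ, (derivative (legendreP (m+1) * legendreP (m+2))).eval x
        = (derivative (legendreP (m+1))).eval x * (legendreP (m+2)).eval x
          + ((2 * (m : ℝ) + 3) * ((legendreP (m+1)).eval x) ^ 2
            + (derivative (legendreP m)).eval x * (legendreP (m+1)).eval x) := by
      intro x
      rw [derivative_mul, legendreP_deriv_sub]
      simp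
      ring
    simp only [key] at h2
    rw [intervalIntegral.integral_add
        (f := fun x => (derivative (legendreP (m+1))).eval x * (legendreP (m+2)).eval x)
        (g := fun x => (2 * (m : ℝ) + 3) * ((legendreP (m+1)).eval x) ^ 2
          + (derivative (legendreP m)).eval x * (legendreP (m+1)).eval x)
        (((derivative (legendreP (m+1))).continuous.mul
          (legendreP (m+2)).continuous).intervalIntegrable _ _)
        ?_ , legendreP_dortho (m+2) (m+1) (by omega), zero_add] at h2
    rotate_left
    · exact ((continuous_const.mul (((legendreP (m+1)).continuous.pow 2))).add
        ((derivative (legendreP m)).continuous.mul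
          ((legendreP (m+1)).continuous))).intervalIntegrable _ _
    rw [intervalIntegral.integral_add
        (f := fun x => (2 * (m : ℝ) + 3) * ((legendreP (m+1)).eval x) ^ 2)
        (g := fun x => (derivative (legendreP m)).eval x * (legendreP (m+1)).eval x)
        ((continuous_const.mul (((legendreP (m+1)).continuous.pow 2))).intervalIntegrable _ _)
        (((derivative (legendreP m)).continuous.mul
          ((legendreP (m+1)).continuous)).intervalIntegrable _ _),
      intervalIntegral.integral_const_mul, legendreP_dortho (m+1) m (by omega), add_zero] at h2
    have hc : (2 * (m : ℝ) + 3) ≠ 0 := by positivity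
    push_cast
    rw [eq_div_iff (by positivity)]
    linarith [h2]
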